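/- Let d = 3 and define the local rule f : Fin 3 → Fin 3 → Fin 3 → Fin 3 by f x y z = z if y = 0, f x y z = −z (mod 3, i.e. 0↦0, 1↦2, 2↦1) if y = 1, and f x y z = z + 2 (mod 3) if y = 2 (the 3-state CA rule 102120210102120210102120210). Then for every odd n ≥ 3, the global map F of the n-cell periodic-boundary CA is bijective. -/
import Mathlib

def f11 : Fin 3 → Fin 3 → Fin 3 → Fin 3 :=
  fun _ y z => if y = 0 then z else if y = 1 then -z else z + 2

lemma f11_det : ∀ x x' y z z' : Fin 3, f11 x y z = f11 x' y z' → z = z' := by decide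

lemma f11_key : ∀ x x' y y' z z' : Fin 3, y ≠ y' → f11 x y z = f11 x' y' z' →
    (y + y' ≠ 2 → (z + z' = 1 - (y + y') ∧ z + z' ≠ 2)) ∧
    (y + y' = 2 → z + z' = 2 → z = 2 - y) := by decide

lemma f11_alt : ∀ x : Fin 3, x ≠ 2 → x = 1 - x → False := by decide
lemma f11_alt2 : ∀ x : Fin 3, x ≠ 1 → x = 2 - x → False := by decide
lemma f11_one : ∀ a b : Fin 3, a ≠ b → a + b = 2 → a ≠ 1 := by decide

theorem stmt_11 (n : ℕ) (hn : 3 ≤ n) (hodd : Odd n) :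
    Function.Bijective
      (fun (c : ZMod n → Fin 3) (i : ZMod n) => f11 (c (i - 1)) (c i) (c (i + 1))) := by
  haveI : NeZero n := ⟨by omega⟩
  rw [← Finite.injective_iff_bijective]
  intro c c' h
  by_contra hne
  obtain ⟨i0, hi0⟩ := Function.ne_iff.mp hne
  have hw : ∀ i : ZMod n, f11 (c (i-1)) (c i) (c (i+1)) = f11 (c' (i-1)) (c' i) (c' (i+1)) :=
    fun i => congrFun h i
  have hcast : ∀ (a : ZMod n) (k : ℕ), (a + ((k+1 : ℕ) : ZMod n)) = (a + k) + 1 := by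
    intro a k; push_cast; ring
  have hreach : ∀ a j : ZMod n, j = a + ((j - a).val : ℕ) := by
    intro a j
    rw [ZMod.natCast_rightInverse (j - a)]
    ring
  -- if the configurations agree anywhere, they agree everywhere
  have hneq : ∀ i : ZMod n, c i ≠ c' i := by
    intro j hj
    apply hne
    have hk : ∀ k : ℕ, c (j + k) = c' (j + k) := by
      intro k
      induction k with
      | zero => simpa using hj
      | succ k ih =>
        rw [hcast]
        have hwjk := hw (j + k)
        rw [ih] at hwjk
        exact f11_det _ _ _ _ _ hwjk
    funext i
    rw [hreach j i]; exact hk _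
  by_cases hall : ∀ i : ZMod n, c i + c' i = 2
  · -- c alternates between 0 and 2
    have hstep : ∀ i : ZMod n, c (i+1) = 2 - c i := fun i =>
      (f11_key _ _ _ _ _ _ (hneq i) (hw i)).2 (hall i) (hall (i+1))
    have hiter : ∀ k : ℕ, c (i0 + k) = (if Even k then c i0 else 2 - c i0) := by
      intro k
      induction k with
      | zero => simp
      | succ k ih =>
        rw [hcast, hstep, ih]
        by_cases he : Even k
        · simp [he, Nat.even_add_one]
        · simp [he, Nat.even_add_one, sub_sub_cancel]
    have h1 := hiter n
    rw [ZMod.natCast_self n, add_zero, if_neg (Nat.not_even_iff_odd.mpr hodd)] at h1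
    exact f11_alt2 _ (f11_one _ _ (hneq i0) (hall i0)) h1
  · -- the sum c i + c' i alternates between two values ≠ 2
    obtain ⟨j0, hj0⟩ := not_forall.mp hall
    have hstep : ∀ i : ZMod n, c i + c' i ≠ 2 →
        c (i+1) + c' (i+1) = 1 - (c i + c' i) ∧ c (i+1) + c' (i+1) ≠ 2 := fun i hi =>
      (f11_key _ _ _ _ _ _ (hneq i) (hw i)).1 hi
    have hiter : ∀ k : ℕ, c (j0 + k) + c' (j0 + k) =
        (if Even k then c j0 + c' j0 else 1 - (c j0 + c' j0)) ∧
        c (j0 + k) + c' (j0 + k) ≠ 2 := by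
      intro k
      induction k with
      | zero => simpa using hj0
      | succ k ih =>
        rw [hcast]
        obtain ⟨h1, h2⟩ := hstep (j0 + k) ih.2
        refine ⟨?_, h2⟩
        rw [h1, ih.1]
        by_cases he : Even k
        · simp [he, Nat.even_add_one]
        · simp [he, Nat.even_add_one, sub_sub_cancel]
    have h1 := (hiter n).1
    rw [ZMod.natCast_self n, add_zero, if_neg (Nat.not_even_iff_odd.mpr hodd)] at h1
    exact f11_alt _ hj0 h1
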